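/- Let Q be a Dynkin quiver, and let M̃_d denote the rigid (generic) representation of dimension vector d. If a subrepresentation N ⊆ M̃_d of dimension vector e exists, then the rigid representation M̃_e embeds into M̃_d, and there is a short exact sequence 0 → M̃_e → M̃_d → M̃_{d−e} → 0 where M̃_{d−e} is the rigid representation of dimension vector d−e. -/

import Mathlib

/-!
STATEMENT 8: Let Q be a Dynkin quiver, and let `M̃_f` denote the rigid (generic)
representation of dimension vector f (characterized by `Ext¹(M̃_f, M̃_f) = 0`).
If a subrepresentation `N ⊆ M̃_d` of dimension vector e exists, then the rigid
representation `M̃_e` embeds into `M̃_d` and there is a short exact sequence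
`0 → M̃_e → M̃_d → M̃_{d−e} → 0`.
-/

noncomputable section
open Matrix

variable {V A : Type}

/-- A complex representation of the quiver `(V, A, s, t)` of dimension vector `d`. -/
abbrev QRep (s t : A → V) (d : V → ℕ) : Type :=
  ∀ a : A, Matrix (Fin (d (t a))) (Fin (d (s a))) ℂ

/-- The quiver Grassmannian `Gr_e(M)`: families of subspaces `N i ⊆ ℂ^{d i}` of
dimension `e i` with `M_a (N (s a)) ⊆ N (t a)` for every arrow. -/
def SubRep (s t : A → V) {d : V → ℕ} (M : QRep s t d) (e : V → ℕ) : Type :=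
  {N : ∀ i : V, Submodule ℂ (Fin (d i) → ℂ) //
    (∀ i, Module.finrank ℂ (N i) = e i) ∧
    ∀ a : A, (N (s a)).map (M a).mulVecLin ≤ N (t a)}

/-- The map `Φ^M_N`, whose cokernel is `Ext¹_Q(N,M)`. -/
def PhiFun (s t : A → V) {e d : V → ℕ} (N : QRep s t e) (M : QRep s t d) :
    (∀ i : V, Matrix (Fin (d i)) (Fin (e i)) ℂ) →
      (∀ a : A, Matrix (Fin (d (t a))) (Fin (e (s a))) ℂ) :=
  fun f a => M a * f (s a) - f (t a) * N a

/-- `Ext¹_Q(N, M) = 0`, expressed as surjectivity of `Φ^M_N` (whose cokernel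
computes `Ext¹` via the standard resolution over the path algebra). -/
def ExtVanish (s t : A → V) {e d : V → ℕ} (N : QRep s t e) (M : QRep s t d) : Prop :=
  Function.Surjective (PhiFun s t N M)

/-- A representation is rigid if `Ext¹_Q(M, M) = 0`. -/
def Rigid (s t : A → V) {d : V → ℕ} (M : QRep s t d) : Prop :=
  ExtVanish s t M M

/-- The Euler form `⟨x,y⟩ = Σ_i x i * y i − Σ_a x (s a) * y (t a)` of the quiver. -/
def eulerForm [Fintype V] [Fintype A] (s t : A → V) (x y : V → ℤ) : ℤ :=
  (∑ i : V, x i * y i) - ∑ a : A, x (s a) * y (t a)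

/-- The quiver is Dynkin (disjoint union of simply-laced Dynkin diagrams), i.e. its
Tits form is positive definite. -/
def IsDynkin [Fintype V] [Fintype A] (s t : A → V) : Prop :=
  ∀ x : V → ℤ, x ≠ 0 → 0 < eulerForm s t x x

/-- Morphisms of representations `X → Y`, given by matrices `φ i` with
`Y_a φ_{s a} = φ_{t a} X_a`. -/
def RHom (s t : A → V) {dX dY : V → ℕ} (X : QRep s t dX) (Y : QRep s t dY) : Type :=
  {φ : ∀ i : V, Matrix (Fin (dY i)) (Fin (dX i)) ℂ //
    ∀ a : A, Y a * φ (s a) = φ (t a) * X a}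

namespace RS

variable [Fintype V] [Fintype A] {s t : A → V}

/-- the space of tuples of square matrices -/
abbrev ESp (s t : A → V) (c : V → ℕ) : Type := ∀ i : V, Matrix (Fin (c i)) (Fin (c i)) ℂ

/-- `W` and `W'` are conjugate (isomorphic) representations -/
def Conj (s t : A → V) {c : V → ℕ} (W W' : QRep s t c) : Prop :=
  ∃ g : ESp s t c, (∀ i, IsUnit (g i)) ∧ ∀ a, g (t a) * W a = W' a * g (s a)

lemma unit_det {n : ℕ} {g : Matrix (Fin n) (Fin n) ℂ} (h : IsUnit g) : IsUnit g.det :=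
  (Matrix.isUnit_iff_isUnit_det g).mp h

lemma unit_mul_inv {n : ℕ} {g : Matrix (Fin n) (Fin n) ℂ} (h : IsUnit g) : g * g⁻¹ = 1 :=
  Matrix.mul_nonsing_inv g (unit_det h)

lemma unit_inv_mul {n : ℕ} {g : Matrix (Fin n) (Fin n) ℂ} (h : IsUnit g) : g⁻¹ * g = 1 :=
  Matrix.nonsing_inv_mul g (unit_det h)

lemma unit_inv_isUnit {n : ℕ} {g : Matrix (Fin n) (Fin n) ℂ} (h : IsUnit g) : IsUnit g⁻¹ :=
  Matrix.isUnit_nonsing_inv_iff.mpr h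

lemma conj_refl {c : V → ℕ} (W : QRep s t c) : Conj s t W W :=
  ⟨fun _ => 1, fun _ => isUnit_one, fun a => by simp⟩

lemma conj_symm {c : V → ℕ} {W W' : QRep s t c} (h : Conj s t W W') : Conj s t W' W := by
  obtain ⟨g, hg, he⟩ := h
  refine ⟨fun i => (g i)⁻¹, fun i => unit_inv_isUnit (hg i), fun a => ?_⟩
  show (g (t a))⁻¹ * W' a = W a * (g (s a))⁻¹
  have h1 : W' a = g (t a) * W a * (g (s a))⁻¹ := by
    rw [he a, Matrix.mul_nonsing_inv_cancel_right _ _ (unit_det (hg (s a)))]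
  rw [h1, ← Matrix.mul_assoc, Matrix.nonsing_inv_mul_cancel_left _ _ (unit_det (hg (t a)))]

lemma conj_trans {c : V → ℕ} {W W' W'' : QRep s t c} (h : Conj s t W W')
    (h' : Conj s t W' W'') : Conj s t W W'' := by
  obtain ⟨g, hg, he⟩ := h
  obtain ⟨g', hg', he'⟩ := h'
  refine ⟨fun i => g' i * g i, fun i => (hg' i).mul (hg i), fun a => ?_⟩
  show g' (t a) * g (t a) * W a = W'' a * (g' (s a) * g (s a))
  rw [Matrix.mul_assoc, he a, ← Matrix.mul_assoc, he' a, Matrix.mul_assoc]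

/-- rigidity transfers along conjugation -/
lemma rigid_of_conj {c : V → ℕ} {W W' : QRep s t c} (hc : Conj s t W W')
    (h : Rigid s t W) : Rigid s t W' := by
  obtain ⟨g, hg, he⟩ := hc
  intro y
  obtain ⟨f', hf'⟩ := h (fun a => (g (t a))⁻¹ * y a * g (s a))
  refine ⟨fun i => g i * f' i * (g i)⁻¹, ?_⟩
  funext a
  have h2 := congrFun hf' a
  simp only [PhiFun] at h2 ⊢
  have hW' : W' a = g (t a) * W a * (g (s a))⁻¹ := by
    rw [he a, Matrix.mul_nonsing_inv_cancel_right _ _ (unit_det (hg (s a)))]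
  have hts : IsUnit (g (s a)).det := unit_det (hg (s a))
  have htt : IsUnit (g (t a)).det := unit_det (hg (t a))
  have expand : g (t a) * W a * (g (s a))⁻¹ * (g (s a) * f' (s a) * (g (s a))⁻¹)
      = g (t a) * (W a * f' (s a)) * (g (s a))⁻¹ := by
    rw [Matrix.mul_assoc (g (s a)) (f' (s a)), Matrix.mul_assoc (g (t a) * W a),
      Matrix.nonsing_inv_mul_cancel_left _ _ hts, ← Matrix.mul_assoc (g (t a) * W a),
      Matrix.mul_assoc (g (t a)) (W a), Matrix.mul_assoc]
  have expand2 : g (t a) * f' (t a) * (g (t a))⁻¹ * (g (t a) * W a * (g (s a))⁻¹)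
      = g (t a) * (f' (t a) * W a) * (g (s a))⁻¹ := by
    rw [Matrix.mul_assoc (g (t a)) (W a), Matrix.mul_assoc (g (t a) * f' (t a)),
      Matrix.nonsing_inv_mul_cancel_left _ _ htt, ← Matrix.mul_assoc (g (t a) * f' (t a)),
      Matrix.mul_assoc (g (t a)) (f' (t a)), Matrix.mul_assoc]
  rw [hW']
  show g (t a) * W a * (g (s a))⁻¹ * (g (s a) * f' (s a) * (g (s a))⁻¹)
      - g (t a) * f' (t a) * (g (t a))⁻¹ * (g (t a) * W a * (g (s a))⁻¹) = y a
  rw [expand, expand2, ← Matrix.sub_mul, ← Matrix.mul_sub, h2,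
    ← Matrix.mul_assoc (g (t a)) ((g (t a))⁻¹ * y a) (g (s a)),
    Matrix.mul_nonsing_inv_cancel_right _ _ hts,
    Matrix.mul_nonsing_inv_cancel_left _ _ htt]


section Bilin

variable (s t)

/-- `g ↦ (a ↦ g (t a) * V a)`, bilinear in `(V, g)`. -/
def leftT (c : V → ℕ) : QRep s t c →ₗ[ℂ] ESp s t c →ₗ[ℂ] QRep s t c :=
  LinearMap.mk₂ ℂ (fun Vv g a => g (t a) * Vv a)
    (fun m₁ m₂ g => by funext a; simp [Matrix.mul_add])
    (fun z m g => by funext a; simp [Matrix.mul_smul])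
    (fun m g₁ g₂ => by funext a; simp [Matrix.add_mul])
    (fun z m g => by funext a; simp [Matrix.smul_mul])

/-- `g ↦ (a ↦ V a * g (s a))`, bilinear in `(V, g)`. -/
def rightT (c : V → ℕ) : QRep s t c →ₗ[ℂ] ESp s t c →ₗ[ℂ] QRep s t c :=
  LinearMap.mk₂ ℂ (fun Vv g a => Vv a * g (s a))
    (fun m₁ m₂ g => by funext a; simp [Matrix.add_mul])
    (fun z m g => by funext a; simp [Matrix.smul_mul])
    (fun m g₁ g₂ => by funext a; simp [Matrix.mul_add])
    (fun z m g => by funext a; simp [Matrix.mul_smul])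

/-- the linear family of maps whose surjectivity is rigidity -/
def phiT (c : V → ℕ) : QRep s t c →ₗ[ℂ] ESp s t c →ₗ[ℂ] QRep s t c :=
  rightT s t c - leftT s t c

lemma phiT_apply {c : V → ℕ} (Vv : QRep s t c) (f : ESp s t c) :
    phiT s t c Vv f = PhiFun s t Vv Vv f := rfl

lemma rigid_iff_phiT_surj {c : V → ℕ} (Vv : QRep s t c) :
    Rigid s t Vv ↔ Function.Surjective (phiT s t c Vv) := Iff.rfl

end Bilin

/-- On a line in representation space through a rigid representation,
all but finitely many points are rigid. -/
lemma rigid_line_finite {c : V → ℕ} (W0 D : QRep s t c) (z0 : ℂ)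
    (h : Rigid s t (W0 + z0 • D)) : {z : ℂ | ¬ Rigid s t (W0 + z • D)}.Finite := by
  classical
  have hsurj : Function.Surjective (phiT s t c (W0 + z0 • D)) :=
    (rigid_iff_phiT_surj s t _).mp h
  obtain ⟨σ, hσ⟩ := (phiT s t c (W0 + z0 • D)).exists_rightInverse_of_surjective
    (LinearMap.range_eq_top.mpr hsurj)
  set bF := Module.finBasis ℂ (QRep s t c) with hbF
  set A0 := LinearMap.toMatrix bF bF ((phiT s t c W0).comp σ) with hA0
  set A1 := LinearMap.toMatrix bF bF ((phiT s t c D).comp σ) with hA1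
  have key : ∀ z : ℂ, LinearMap.toMatrix bF bF ((phiT s t c (W0 + z • D)).comp σ)
      = A0 + z • A1 := by
    intro z
    rw [hA0, hA1, map_add (phiT s t c), _root_.map_smul (phiT s t c),
      LinearMap.add_comp, LinearMap.smul_comp, map_add (LinearMap.toMatrix bF bF),
      _root_.map_smul (LinearMap.toMatrix bF bF)]
  set p : Polynomial ℂ :=
    (Matrix.of fun i j => Polynomial.C (A0 i j) + Polynomial.X * Polynomial.C (A1 i j)).det
    with hp
  have hev : ∀ z, p.eval z = (A0 + z • A1).det := by
    intro z
    have hmap : (Matrix.of fun i j => Polynomial.C (A0 i j)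
        + Polynomial.X * Polynomial.C (A1 i j)).map (Polynomial.evalRingHom z)
        = A0 + z • A1 := by
      ext i j
      simp only [Matrix.map_apply, Matrix.of_apply, Polynomial.coe_evalRingHom,
        Polynomial.eval_add, Polynomial.eval_mul, Polynomial.eval_C, Polynomial.eval_X,
        Matrix.add_apply, Matrix.smul_apply, smul_eq_mul]
    rw [← hmap, ← RingHom.mapMatrix_apply, ← RingHom.map_det]
    simp [hp]
  have hp0 : p.eval z0 = 1 := by
    rw [hev, ← key z0, hσ, LinearMap.toMatrix_id, Matrix.det_one]
  have hpne : p ≠ 0 := by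
    intro h0
    rw [h0] at hp0
    simp at hp0
  refine Set.Finite.subset (Polynomial.finite_setOf_isRoot hpne) ?_
  intro z hz
  by_contra hroot
  apply hz
  have hdet : (A0 + z • A1).det ≠ 0 := by rw [← hev]; exact hroot
  rw [rigid_iff_phiT_surj]
  intro y
  set Az := A0 + z • A1 with hAz
  set u : Fin (Module.finrank ℂ (QRep s t c)) → ℂ := Az⁻¹ *ᵥ ⇑(bF.repr y) with hu
  set x := bF.repr.symm (Finsupp.equivFunOnFinite.symm u) with hx
  refine ⟨σ x, ?_⟩
  have hxcoe : ⇑(bF.repr x) = u := by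
    rw [hx, LinearEquiv.apply_symm_apply]
    rfl
  have h2 : (((phiT s t c) (W0 + z • D)).comp σ) x = y := by
    apply bF.repr.injective
    apply DFunLike.coe_injective
    beta_reduce
    rw [← LinearMap.toMatrix_mulVec_repr bF bF (((phiT s t c) (W0 + z • D)).comp σ) x,
      key z, hxcoe, hu,
      Matrix.mulVec_mulVec, Matrix.mul_nonsing_inv _ (isUnit_iff_ne_zero.mpr hdet),
      Matrix.one_mulVec]
  exact h2

open Filter in
/-- Local conjugacy: every representation near a rigid one is conjugate to it. -/
lemma eventually_conj {c : V → ℕ} (W : QRep s t c) (h : Rigid s t W) :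
    ∀ᶠ Vv in nhds W, Conj s t W Vv := by
  classical
  set TL : QRep s t c → (ESp s t c →ₗ[ℂ] QRep s t c) :=
    fun Vv => leftT s t c W - rightT s t c Vv with hTL
  have hTL1 : ∀ Vv : QRep s t c, TL Vv 1 = W - Vv := by
    intro Vv
    funext a
    show (leftT s t c W) 1 a - (rightT s t c Vv) 1 a = W a - Vv a
    simp [leftT, rightT]
  have hsurjT : Function.Surjective (TL W) := by
    intro y
    obtain ⟨f, hf⟩ := h (-y)
    refine ⟨f, ?_⟩
    have : phiT s t c W f = -y := hf
    have h2 : TL W f = -(phiT s t c W f) := by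
      show (leftT s t c W) f - (rightT s t c W) f = -((rightT s t c W) f - (leftT s t c W) f)
      rw [neg_sub]
    rw [h2, this, neg_neg]
  obtain ⟨σ, hσ⟩ := (TL W).exists_rightInverse_of_surjective (LinearMap.range_eq_top.mpr hsurjT)
  set n := Module.finrank ℂ (QRep s t c) with hn
  set bF : Module.Basis (Fin n) ℂ (QRep s t c) := Module.finBasis ℂ (QRep s t c) with hbF
  set Am : QRep s t c → Matrix (Fin n) (Fin n) ℂ :=
    fun Vv => LinearMap.toMatrix bF bF ((TL Vv).comp σ) with hAm
  have hAmW : Am W = 1 := by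
    rw [hAm]
    beta_reduce
    rw [hσ, LinearMap.toMatrix_id]
  have hAmcont : Continuous Am := by
    have hsplit : Am = fun Vv => LinearMap.toMatrix bF bF ((leftT s t c W).comp σ)
        - LinearMap.toMatrix bF bF ((rightT s t c Vv).comp σ) := by
      funext Vv
      rw [hAm]
      beta_reduce
      rw [hTL]
      beta_reduce
      rw [LinearMap.sub_comp]
      exact map_sub (LinearMap.toMatrix bF bF).toAddEquiv _ _
    rw [hsplit]
    refine continuous_const.sub ?_
    have hlin : IsLinearMap ℂ (fun Vv : QRep s t c =>
        LinearMap.toMatrix bF bF ((rightT s t c Vv).comp σ)) := by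
      constructor
      · intro x y; rw [map_add (rightT s t c), LinearMap.add_comp, map_add]
      · intro z x; rw [_root_.map_smul (rightT s t c), LinearMap.smul_comp, _root_.map_smul]
    exact (IsLinearMap.mk' _ hlin).continuous_of_finiteDimensional
  set Lσ : (Fin n → ℂ) →ₗ[ℂ] ESp s t c :=
    σ ∘ₗ (bF.repr.symm.toLinearMap ∘ₗ
      (Finsupp.linearEquivFunOnFinite ℂ ℂ (Fin n)).symm.toLinearMap) with hLσ
  have hreprLσ : ∀ u : Fin n → ℂ, ∀ Vv : QRep s t c,
      ⇑(bF.repr ((TL Vv) (Lσ u))) = Am Vv *ᵥ u := by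
    intro u Vv
    have h1 : (TL Vv) (Lσ u) = ((TL Vv).comp σ)
        (bF.repr.symm ((Finsupp.linearEquivFunOnFinite ℂ ℂ (Fin n)).symm u)) := rfl
    rw [h1, ← LinearMap.toMatrix_mulVec_repr bF bF, LinearEquiv.apply_symm_apply]
    rfl
  set bv : QRep s t c → (Fin n → ℂ) := fun Vv => ⇑(bF.repr (W - Vv)) with hbv
  have hbvcont : Continuous bv := by
    have hlin2 : IsLinearMap ℂ (fun Vv : QRep s t c => ⇑(bF.repr Vv)) := by
      constructor
      · intro x y; rw [map_add]; rfl
      · intro z x; rw [_root_.map_smul]; rfl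
    have : bv = fun Vv => ⇑(bF.repr W) - ⇑(bF.repr Vv) := by
      funext Vv; rw [hbv]; beta_reduce; rw [map_sub]; rfl
    rw [this]
    exact continuous_const.sub (IsLinearMap.mk' _ hlin2).continuous_of_finiteDimensional
  set xv : QRep s t c → (Fin n → ℂ) :=
    fun Vv => ((Am Vv).det)⁻¹ • ((Am Vv).adjugate *ᵥ (bv Vv)) with hxv
  have hdet1 : (Am W).det = 1 := by rw [hAmW, Matrix.det_one]
  have hdetcont : Continuous fun Vv => (Am Vv).det := hAmcont.matrix_det
  have hxvcont : ContinuousAt xv W := by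
    apply ContinuousAt.fun_smul
    · exact (hdetcont.continuousAt).inv₀
        (by show (Am W).det ≠ 0; rw [hdet1]; norm_num)
    · exact ((hAmcont.matrix_adjugate).matrix_mulVec hbvcont).continuousAt
  have hxvW : xv W = 0 := by
    rw [hxv]
    beta_reduce
    rw [hbv]
    beta_reduce
    rw [sub_self, map_zero]
    show _ • ((Am W).adjugate *ᵥ (0 : Fin n → ℂ)) = 0
    rw [Matrix.mulVec_zero, smul_zero]
  set gf : QRep s t c → ESp s t c := fun Vv => (1 : ESp s t c) - Lσ (xv Vv) with hgf
  have hgfcont : ContinuousAt gf W :=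
    continuousAt_const.sub ((Lσ.continuous_of_finiteDimensional).continuousAt.comp hxvcont)
  have hgfW : gf W = 1 := by rw [hgf]; beta_reduce; rw [hxvW, map_zero, sub_zero]
  have hev1 : ∀ᶠ Vv in nhds W, (Am Vv).det ≠ 0 := by
    apply hdetcont.continuousAt.eventually_ne
    show (Am W).det ≠ 0
    rw [hdet1]; norm_num
  have hev2 : ∀ᶠ Vv in nhds W, ∀ i, IsUnit (gf Vv i) := by
    rw [eventually_all]
    intro i
    have hci : ContinuousAt (fun Vv => (gf Vv i).det) W :=
      (continuous_id.matrix_det.continuousAt).comp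
        (((continuous_apply i).continuousAt).comp hgfcont)
    have hvi : (gf W i).det = 1 := by
      rw [hgfW]
      show (1 : Matrix (Fin (c i)) (Fin (c i)) ℂ).det = 1
      rw [Matrix.det_one]
    have := hci.eventually_ne
      (show (gf W i).det ≠ 0 by rw [hvi]; norm_num)
    filter_upwards [this] with Vv hVv
    exact (Matrix.isUnit_iff_isUnit_det _).mpr (isUnit_iff_ne_zero.mpr hVv)
  filter_upwards [hev1, hev2] with Vv hdet hunit
  refine ⟨gf Vv, hunit, ?_⟩
  have hzero : (TL Vv) (gf Vv) = 0 := by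
    apply bF.repr.injective
    apply DFunLike.coe_injective
    beta_reduce
    rw [hgf]
    beta_reduce
    rw [map_sub, map_sub]
    show ⇑(bF.repr ((TL Vv) 1) - bF.repr ((TL Vv) (Lσ (xv Vv)))) = ⇑(bF.repr (0 : QRep s t c))
    rw [map_zero, Finsupp.coe_sub]
    have hA : ⇑(bF.repr ((TL Vv) (Lσ (xv Vv)))) = Am Vv *ᵥ xv Vv := hreprLσ _ _
    have hB : ⇑(bF.repr ((TL Vv) 1)) = bv Vv := by rw [hTL1 Vv]
    rw [hA, hB, hxv]
    beta_reduce
    rw [Matrix.mulVec_smul, Matrix.mulVec_mulVec, Matrix.mul_adjugate,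
      Matrix.smul_mulVec, Matrix.one_mulVec, smul_smul,
      inv_mul_cancel₀ hdet, one_smul, sub_self, Finsupp.coe_zero]
  intro a
  have hz := congrFun hzero a
  have hz2 : (gf Vv) (t a) * W a - Vv a * (gf Vv) (s a) = 0 := hz
  rw [sub_eq_zero] at hz2
  exact hz2

/-- Uniqueness of rigid representations with given dimension vector, up to conjugacy. -/
lemma conj_of_rigid {c : V → ℕ} (M0 M1 : QRep s t c) (h0 : Rigid s t M0)
    (h1 : Rigid s t M1) : Conj s t M0 M1 := by
  classical
  set γ : ℂ → QRep s t c := fun z => M0 + z • (M1 - M0) with hγ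
  have hγ0 : γ 0 = M0 := by rw [hγ]; beta_reduce; rw [zero_smul, add_zero]
  have hγ1 : γ 1 = M1 := by rw [hγ]; beta_reduce; rw [one_smul, add_sub_cancel]
  have hγcont : Continuous γ := continuous_const.add (continuous_id.smul continuous_const)
  have hBad : {z : ℂ | ¬ Rigid s t (γ z)}.Finite := by
    apply rigid_line_finite M0 (M1 - M0) 0
    rw [zero_smul, add_zero]
    exact h0
  set S := {z : ℂ | ¬ Rigid s t (γ z)}ᶜ with hS
  have hconn : IsPreconnected S := by
    refine (Set.Countable.isPathConnected_compl_of_one_lt_rank ?_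
      hBad.countable).isConnected.isPreconnected
    rw [Complex.rank_real_complex]
    norm_num
  have h0S : (0:ℂ) ∈ S := by
    simp only [hS, Set.mem_compl_iff, Set.mem_setOf_eq, not_not, hγ0]
    exact h0
  have h1S : (1:ℂ) ∈ S := by
    simp only [hS, Set.mem_compl_iff, Set.mem_setOf_eq, not_not, hγ1]
    exact h1
  have hO : ∀ z ∈ S, ∃ O : Set ℂ, IsOpen O ∧ z ∈ O ∧ ∀ w ∈ O, Conj s t (γ z) (γ w) := by
    intro z hz
    have hrig : Rigid s t (γ z) := not_not.mp hz
    have hev2 : ∀ᶠ w in nhds z, Conj s t (γ z) (γ w) :=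
      (hγcont.continuousAt (x := z)).eventually (eventually_conj (γ z) hrig)
    obtain ⟨O, hOsub, hOopen, hzO⟩ := eventually_nhds_iff.mp hev2
    exact ⟨O, hOopen, hzO, hOsub⟩
  choose O hOopen hmem hconjO using hO
  set U := ⋃ (z : ℂ) (h : z ∈ S) (_ : Conj s t M0 (γ z)), O z h with hU
  set U' := ⋃ (z : ℂ) (h : z ∈ S) (_ : ¬ Conj s t M0 (γ z)), O z h with hU'
  have hUopen : IsOpen U :=
    isOpen_iUnion fun z => isOpen_iUnion fun h => isOpen_iUnion fun _ => hOopen z h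
  have hU'open : IsOpen U' :=
    isOpen_iUnion fun z => isOpen_iUnion fun h => isOpen_iUnion fun _ => hOopen z h
  have hcover : S ⊆ U ∪ U' := by
    intro z hz
    by_cases hc : Conj s t M0 (γ z)
    · left
      rw [hU]
      exact Set.mem_iUnion.mpr ⟨z, Set.mem_iUnion.mpr ⟨hz, Set.mem_iUnion.mpr ⟨hc, hmem z hz⟩⟩⟩
    · right
      rw [hU']
      exact Set.mem_iUnion.mpr ⟨z, Set.mem_iUnion.mpr ⟨hz, Set.mem_iUnion.mpr ⟨hc, hmem z hz⟩⟩⟩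
  by_contra hfinal
  have hne1 : (S ∩ U).Nonempty := by
    refine ⟨0, h0S, ?_⟩
    rw [hU]
    refine Set.mem_iUnion.mpr ⟨0, Set.mem_iUnion.mpr ⟨h0S, Set.mem_iUnion.mpr ⟨?_, hmem 0 h0S⟩⟩⟩
    rw [hγ0]
    exact conj_refl M0
  have hne2 : (S ∩ U').Nonempty := by
    refine ⟨1, h1S, ?_⟩
    rw [hU']
    refine Set.mem_iUnion.mpr ⟨1, Set.mem_iUnion.mpr ⟨h1S, Set.mem_iUnion.mpr ⟨?_, hmem 1 h1S⟩⟩⟩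
    rw [hγ1]
    exact hfinal
  obtain ⟨w, hwS, hwUU'⟩ := hconn U U' hUopen hU'open hcover hne1 hne2
  obtain ⟨hwU, hwU'⟩ := hwUU'
  rw [hU] at hwU
  rw [hU'] at hwU'
  obtain ⟨z1, hw1⟩ := Set.mem_iUnion.mp hwU
  obtain ⟨hz1, hw1⟩ := Set.mem_iUnion.mp hw1
  obtain ⟨hc1, hw1⟩ := Set.mem_iUnion.mp hw1
  obtain ⟨z2, hw2⟩ := Set.mem_iUnion.mp hwU'
  obtain ⟨hz2, hw2⟩ := Set.mem_iUnion.mp hw2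
  obtain ⟨hc2, hw2⟩ := Set.mem_iUnion.mp hw2
  exact hc2 (conj_trans (conj_trans hc1 (hconjO z1 hz1 w hw1)) (conj_symm (hconjO z2 hz2 w hw2)))

section Blocks

/-- embedding of the high coordinates -/
def femb {n k : ℕ} (h : k ≤ n) (j : Fin (n - k)) : Fin n :=
  ⟨k + j.1, by omega⟩

/-- inclusion matrix of the first `k` coordinates -/
def Jmat {n k : ℕ} (h : k ≤ n) : Matrix (Fin n) (Fin k) ℂ :=
  fun r c => if r = Fin.castLE h c then 1 else 0

/-- projection matrix onto the last `n - k` coordinates -/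
def Kmat {n k : ℕ} (h : k ≤ n) : Matrix (Fin (n - k)) (Fin n) ℂ :=
  fun r c => if c = femb h r then 1 else 0

lemma Kmat_mulVec {n k : ℕ} (h : k ≤ n) (v : Fin n → ℂ) :
    (Kmat h) *ᵥ v = fun r => v (femb h r) := by
  funext r
  simp only [Matrix.mulVec, dotProduct, Kmat, ite_mul, one_mul, zero_mul]
  rw [Finset.sum_ite_eq' Finset.univ (femb h r) v]
  simp

lemma Jmat_mulVec_cast {n k : ℕ} (h : k ≤ n) (x : Fin k → ℂ) (c : Fin k) :
    ((Jmat h) *ᵥ x) (Fin.castLE h c) = x c := by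
  simp only [Matrix.mulVec, dotProduct, Jmat, ite_mul, one_mul, zero_mul]
  have hcong : ∀ q : Fin k, (Fin.castLE h c = Fin.castLE h q) ↔ (q = c) := by
    intro q
    constructor
    · intro hq; exact Fin.ext (congrArg Fin.val hq).symm
    · intro hq; rw [hq]
  rw [Finset.sum_congr rfl (fun q _ => by rw [if_congr (hcong q) rfl rfl])]
  rw [Finset.sum_ite_eq' Finset.univ c x]
  simp

lemma Jmat_mulVec_high {n k : ℕ} (h : k ≤ n) (x : Fin k → ℂ) (r : Fin n)
    (hr : k ≤ (r : ℕ)) : ((Jmat h) *ᵥ x) r = 0 := by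
  simp only [Matrix.mulVec, dotProduct, Jmat, ite_mul, one_mul, zero_mul]
  rw [Finset.sum_congr rfl (fun q _ => ?_), Finset.sum_const_zero]
  rw [if_neg]
  intro hq
  have : (r : ℕ) = (q : ℕ) := congrArg Fin.val hq
  have : (q : ℕ) < k := q.isLt
  omega

lemma Jmat_inj {n k : ℕ} (h : k ≤ n) : Function.Injective (Jmat h).mulVecLin := by
  intro x y hxy
  funext c
  have h1 : ((Jmat h) *ᵥ x) (Fin.castLE h c) = ((Jmat h) *ᵥ y) (Fin.castLE h c) :=
    congrFun hxy (Fin.castLE h c)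
  rwa [Jmat_mulVec_cast, Jmat_mulVec_cast] at h1

lemma Kmat_surj {n k : ℕ} (h : k ≤ n) : Function.Surjective (Kmat h).mulVecLin := by
  intro y
  refine ⟨fun c => if hc : k ≤ (c : ℕ) then y ⟨(c : ℕ) - k, by omega⟩ else 0, ?_⟩
  show (Kmat h) *ᵥ _ = y
  rw [Kmat_mulVec]
  funext r
  have h1 : k ≤ ((femb h r : Fin n) : ℕ) := by simp [femb]
  rw [dif_pos h1]
  congr 1
  apply Fin.ext
  simp [femb]

lemma KJ_zero {n k : ℕ} (h : k ≤ n) : Kmat h * Jmat h = 0 := by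
  ext r c
  rw [Matrix.mul_apply]
  have hterm : ∀ q : Fin n, Kmat h r q * Jmat h q c = 0 := by
    intro q
    simp only [Kmat, Jmat, ite_mul, one_mul, zero_mul]
    by_cases hq : q = femb h r
    · rw [if_pos hq, if_neg]
      intro h2
      have h3 : (q : ℕ) = k + (r : ℕ) := by rw [hq]; rfl
      have h4 : (q : ℕ) = (c : ℕ) := by rw [h2]; rfl
      have h5 : (c : ℕ) < k := c.isLt
      omega
    · rw [if_neg hq]
  rw [Finset.sum_congr rfl (fun q _ => hterm q), Finset.sum_const_zero]
  simp

lemma finrank_ker_K {n k : ℕ} (h : k ≤ n) :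
    Module.finrank ℂ (LinearMap.ker (Kmat h).mulVecLin) = k := by
  have h3 := LinearMap.finrank_range_add_finrank_ker (Kmat h).mulVecLin
  rw [LinearMap.range_eq_top.mpr (Kmat_surj h), finrank_top] at h3
  simp at h3
  omega

lemma range_J_eq_ker_K {n k : ℕ} (h : k ≤ n) :
    LinearMap.range (Jmat h).mulVecLin = LinearMap.ker (Kmat h).mulVecLin := by
  apply Submodule.eq_of_le_of_finrank_eq
  · rintro _ ⟨x, rfl⟩
    rw [LinearMap.mem_ker]
    show (Kmat h) *ᵥ ((Jmat h) *ᵥ x) = 0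
    rw [Matrix.mulVec_mulVec, KJ_zero, Matrix.zero_mulVec]
  · have h1 : Module.finrank ℂ (LinearMap.range (Jmat h).mulVecLin) = k := by
      rw [LinearMap.finrank_range_of_inj (Jmat_inj h)]
      simp
    rw [h1, finrank_ker_K h]

variable (s t)

/-- block lower-left vanishing (triangularity) -/
def Tri (d e : V → ℕ) (W : QRep s t d) : Prop :=
  ∀ a (r : Fin (d (t a))) (c : Fin (d (s a))),
    e (t a) ≤ (r : ℕ) → (c : ℕ) < e (s a) → W a r c = 0

/-- upper-left diagonal block -/
def Ubl (d e : V → ℕ) (hle : ∀ i, e i ≤ d i) (W : QRep s t d) : QRep s t e :=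
  fun a r c => W a (Fin.castLE (hle (t a)) r) (Fin.castLE (hle (s a)) c)

/-- lower-right diagonal block -/
def Xbl (d e : V → ℕ) (hle : ∀ i, e i ≤ d i) (W : QRep s t d) :
    QRep s t (fun i => d i - e i) :=
  fun a r c => W a (femb (hle (t a)) r) (femb (hle (s a)) c)

lemma W_mul_J {d e : V → ℕ} (hle : ∀ i, e i ≤ d i) {W : QRep s t d}
    (hT : Tri s t d e W) (a : A) :
    W a * Jmat (hle (s a)) = Jmat (hle (t a)) * Ubl s t d e hle W a := by
  ext r c
  rw [Matrix.mul_apply, Matrix.mul_apply]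
  have hL : ∑ q, W a r q * Jmat (hle (s a)) q c = W a r (Fin.castLE (hle (s a)) c) := by
    simp only [Jmat, mul_ite, mul_one, mul_zero]
    rw [Finset.sum_ite_eq' Finset.univ (Fin.castLE (hle (s a)) c) (W a r)]
    simp
  rw [hL]
  by_cases hr : (r : ℕ) < e (t a)
  · have hterm : ∀ q : Fin (e (t a)), Jmat (hle (t a)) r q * Ubl s t d e hle W a q c
        = (if (⟨(r : ℕ), hr⟩ : Fin (e (t a))) = q then Ubl s t d e hle W a q c else 0) := by
      intro q
      simp only [Jmat, ite_mul, one_mul, zero_mul]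
      congr 1
      apply propext
      constructor
      · intro hq; apply Fin.ext; have h1 := congrArg Fin.val hq; simpa using h1
      · intro hq; apply Fin.ext; have h1 := congrArg Fin.val hq; simpa using h1
    rw [Finset.sum_congr rfl (fun q _ => hterm q)]
    rw [Finset.sum_ite_eq Finset.univ (⟨(r : ℕ), hr⟩ : Fin (e (t a)))
      (fun q => Ubl s t d e hle W a q c)]
    simp only [Finset.mem_univ, if_true]
    show W a r (Fin.castLE (hle (s a)) c)
      = W a (Fin.castLE (hle (t a)) ⟨(r : ℕ), hr⟩) (Fin.castLE (hle (s a)) c)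
    congr 1
  · have hterm : ∀ q : Fin (e (t a)), Jmat (hle (t a)) r q * Ubl s t d e hle W a q c = 0 := by
      intro q
      simp only [Jmat, ite_mul, one_mul, zero_mul]
      rw [if_neg]
      intro hq
      have : (r : ℕ) = (q : ℕ) := congrArg Fin.val hq
      have := q.isLt
      omega
    rw [Finset.sum_congr rfl (fun q _ => hterm q), Finset.sum_const_zero]
    exact hT a r (Fin.castLE (hle (s a)) c) (not_lt.mp hr) c.isLt

lemma X_mul_K {d e : V → ℕ} (hle : ∀ i, e i ≤ d i) {W : QRep s t d}
    (hT : Tri s t d e W) (a : A) :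
    Xbl s t d e hle W a * Kmat (hle (s a)) = Kmat (hle (t a)) * W a := by
  ext r c
  rw [Matrix.mul_apply, Matrix.mul_apply]
  have hR : ∑ q, Kmat (hle (t a)) r q * W a q c = W a (femb (hle (t a)) r) c := by
    simp only [Kmat, ite_mul, one_mul, zero_mul]
    rw [Finset.sum_ite_eq' Finset.univ (femb (hle (t a)) r) (fun q => W a q c)]
    simp
  rw [hR]
  by_cases hc : e (s a) ≤ (c : ℕ)
  · have hceq : c = femb (hle (s a)) ⟨(c : ℕ) - e (s a), by omega⟩ := by
      apply Fin.ext
      show (c : ℕ) = e (s a) + ((c : ℕ) - e (s a))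
      omega
    have hterm : ∀ q : Fin (d (s a) - e (s a)),
        Xbl s t d e hle W a r q * Kmat (hle (s a)) q c
        = (if (⟨(c : ℕ) - e (s a), by omega⟩ : Fin (d (s a) - e (s a))) = q
            then Xbl s t d e hle W a r q else 0) := by
      intro q
      simp only [Kmat, mul_ite, mul_one, mul_zero]
      congr 1
      apply propext
      constructor
      · intro hq
        apply Fin.ext
        have h1 : (c : ℕ) = e (s a) + (q : ℕ) := congrArg Fin.val hq
        show (c : ℕ) - e (s a) = (q : ℕ)
        omega
      · intro hq
        rw [hceq]
        apply Fin.ext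
        show e (s a) + ((c : ℕ) - e (s a)) = e (s a) + (q : ℕ)
        have : (c : ℕ) - e (s a) = (q : ℕ) := congrArg Fin.val hq
        omega
    rw [Finset.sum_congr rfl (fun q _ => hterm q)]
    rw [Finset.sum_ite_eq Finset.univ _ (fun q => Xbl s t d e hle W a r q)]
    simp only [Finset.mem_univ, if_true]
    show W a (femb (hle (t a)) r) (femb (hle (s a)) _) = W a (femb (hle (t a)) r) c
    rw [← hceq]
  · have hterm : ∀ q : Fin (d (s a) - e (s a)),
        Xbl s t d e hle W a r q * Kmat (hle (s a)) q c = 0 := by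
      intro q
      simp only [Kmat, mul_ite, mul_one, mul_zero]
      rw [if_neg]
      intro hq
      have h1 : (c : ℕ) = e (s a) + (q : ℕ) := congrArg Fin.val hq
      omega
    rw [Finset.sum_congr rfl (fun q _ => hterm q), Finset.sum_const_zero]
    symm
    apply hT a _ c _ (not_le.mp hc)
    show e (t a) ≤ e (t a) + (r : ℕ)
    omega

variable {s t}

end Blocks

/-- From a subrepresentation, produce a triangular conjugate of `Md`. -/
lemma exists_tri_conj {d e : V → ℕ} (hle : ∀ i, e i ≤ d i) (Md : QRep s t d)
    (N : SubRep s t Md e) : ∃ W0 : QRep s t d, Tri s t d e W0 ∧ Conj s t W0 Md := by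
  classical
  set Estd : ∀ i, Submodule ℂ (Fin (d i) → ℂ) :=
    fun i => LinearMap.ker (Kmat (hle i)).mulVecLin with hEstd
  have hcomplE : ∀ i, ∃ q, IsCompl (Estd i) q := fun i => Submodule.exists_isCompl _
  have hcomplN : ∀ i, ∃ q, IsCompl (N.1 i) q := fun i => Submodule.exists_isCompl _
  choose qE hqE using hcomplE
  choose qN hqN using hcomplN
  have hrkE : ∀ i, Module.finrank ℂ (Estd i) = e i := fun i => finrank_ker_K (hle i)
  have hrkN : ∀ i, Module.finrank ℂ (N.1 i) = e i := N.2.1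
  have hwhole : ∀ i, Module.finrank ℂ (Fin (d i) → ℂ) = d i := by
    intro i; simp
  have hrkqE : ∀ i, Module.finrank ℂ (qE i) = d i - e i := by
    intro i
    have := Submodule.finrank_add_eq_of_isCompl (hqE i)
    rw [hrkE i, hwhole i] at this
    omega
  have hrkqN : ∀ i, Module.finrank ℂ (qN i) = d i - e i := by
    intro i
    have := Submodule.finrank_add_eq_of_isCompl (hqN i)
    rw [hrkN i, hwhole i] at this
    omega
  have heq1 : ∀ i, Module.finrank ℂ (Estd i) = Module.finrank ℂ (N.1 i) := by
    intro i; rw [hrkE i, hrkN i]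
  have heq2 : ∀ i, Module.finrank ℂ (qE i) = Module.finrank ℂ (qN i) := by
    intro i; rw [hrkqE i, hrkqN i]
  set eE : ∀ i, (Estd i) ≃ₗ[ℂ] (N.1 i) := fun i => LinearEquiv.ofFinrankEq _ _ (heq1 i)
  set eQ : ∀ i, (qE i) ≃ₗ[ℂ] (qN i) := fun i => LinearEquiv.ofFinrankEq _ _ (heq2 i)
  set G : ∀ i, (Fin (d i) → ℂ) ≃ₗ[ℂ] (Fin (d i) → ℂ) := fun i =>
    ((Submodule.prodEquivOfIsCompl _ _ (hqE i)).symm.trans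
      ((eE i).prodCongr (eQ i))).trans (Submodule.prodEquivOfIsCompl _ _ (hqN i)) with hG
  have hGapp : ∀ i, ∀ v, v ∈ Estd i → (G i) v ∈ N.1 i := by
    intro i v hv
    show (Submodule.prodEquivOfIsCompl _ _ (hqN i))
      (((eE i).prodCongr (eQ i)) ((Submodule.prodEquivOfIsCompl _ _ (hqE i)).symm v)) ∈ N.1 i
    rw [show v = ((⟨v, hv⟩ : Estd i) : Fin (d i) → ℂ) from rfl,
      Submodule.prodEquivOfIsCompl_symm_apply_left]
    rw [show ((eE i).prodCongr (eQ i)) (⟨v, hv⟩, 0) = ((eE i) ⟨v, hv⟩, 0) by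
      simp [LinearEquiv.prodCongr_apply]]
    rw [Submodule.coe_prodEquivOfIsCompl']
    simp
  have hGmap : ∀ i, (Estd i).map (G i).toLinearMap = N.1 i := by
    intro i
    apply Submodule.eq_of_le_of_finrank_eq
    · rintro _ ⟨v, hv, rfl⟩
      exact hGapp i v hv
    · rw [LinearEquiv.finrank_map_eq, hrkE i, hrkN i]
  set W0 : QRep s t d := fun a => LinearMap.toMatrix'
    ((G (t a)).symm.toLinearMap ∘ₗ (Md a).mulVecLin ∘ₗ (G (s a)).toLinearMap) with hW0
  have hmulV : ∀ a, (W0 a).mulVecLin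
      = (G (t a)).symm.toLinearMap ∘ₗ (Md a).mulVecLin ∘ₗ (G (s a)).toLinearMap := by
    intro a
    rw [hW0]
    beta_reduce
    rw [← Matrix.toLin'_apply', Matrix.toLin'_toMatrix']
  refine ⟨W0, ?_, ?_⟩
  · -- triangularity
    intro a r c hr hc
    have hsingle : Pi.single c (1:ℂ) ∈ Estd (s a) := by
      rw [hEstd]
      beta_reduce
      rw [LinearMap.mem_ker]
      show (Kmat (hle (s a))) *ᵥ Pi.single c 1 = 0
      rw [Kmat_mulVec]
      funext r'
      apply Pi.single_eq_of_ne
      intro heq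
      have h1 : e (s a) + (r' : ℕ) = (c : ℕ) := congrArg Fin.val heq
      omega
    have h2 : (G (s a)) (Pi.single c 1) ∈ N.1 (s a) := hGapp (s a) _ hsingle
    have h3 : (Md a).mulVecLin ((G (s a)) (Pi.single c 1)) ∈ N.1 (t a) :=
      N.2.2 a ⟨_, h2, rfl⟩
    have h4 : (G (t a)).symm ((Md a).mulVecLin ((G (s a)) (Pi.single c 1))) ∈ Estd (t a) := by
      rw [← hGmap (t a)] at h3
      obtain ⟨u, hu, heq⟩ := h3
      have : (G (t a)).symm ((Md a).mulVecLin ((G (s a)) (Pi.single c 1))) = u := by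
        rw [← heq]
        exact (G (t a)).symm_apply_apply u
      rw [this]
      exact hu
    have h5 : (W0 a) *ᵥ Pi.single c 1
        = (G (t a)).symm ((Md a).mulVecLin ((G (s a)) (Pi.single c 1))) :=
      LinearMap.congr_fun (hmulV a) (Pi.single c 1)
    have h6 : ((W0 a) *ᵥ Pi.single c 1) r = 0 := by
      have hker : (Kmat (hle (t a))) *ᵥ
          ((G (t a)).symm ((Md a).mulVecLin ((G (s a)) (Pi.single c 1)))) = 0 := h4
      rw [Kmat_mulVec] at hker
      have h8 : ((G (t a)).symm ((Md a).mulVecLin ((G (s a)) (Pi.single c 1))))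
          (femb (hle (t a)) ⟨(r : ℕ) - e (t a), by omega⟩) = 0 := congrFun hker _
      have h9 : femb (hle (t a)) (⟨(r : ℕ) - e (t a), by omega⟩
          : Fin (d (t a) - e (t a))) = r := by
        apply Fin.ext
        show e (t a) + ((r : ℕ) - e (t a)) = (r : ℕ)
        omega
      rw [h9] at h8
      rw [h5]
      exact h8
    rw [Matrix.mulVec_single_one] at h6
    exact h6
  · -- conjugacy to Md
    refine ⟨fun i => LinearMap.toMatrix' (G i).toLinearMap, ?_, ?_⟩
    · intro i
      have hid1 : (G i).toLinearMap ∘ₗ (G i).symm.toLinearMap = LinearMap.id := by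
        ext v; simp
      have hid2 : (G i).symm.toLinearMap ∘ₗ (G i).toLinearMap = LinearMap.id := by
        ext v; simp
      refine ⟨⟨LinearMap.toMatrix' (G i).toLinearMap,
        LinearMap.toMatrix' (G i).symm.toLinearMap, ?_, ?_⟩, rfl⟩
      · rw [← LinearMap.toMatrix'_comp, hid1, LinearMap.toMatrix'_id]
      · rw [← LinearMap.toMatrix'_comp, hid2, LinearMap.toMatrix'_id]
    · intro a
      rw [hW0]
      beta_reduce
      rw [← LinearMap.toMatrix'_comp]
      have hcomp : (G (t a)).toLinearMap ∘ₗ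
          ((G (t a)).symm.toLinearMap ∘ₗ (Md a).mulVecLin ∘ₗ (G (s a)).toLinearMap)
          = (Md a).mulVecLin ∘ₗ (G (s a)).toLinearMap := by
        ext v
        simp
      rw [hcomp, LinearMap.toMatrix'_comp]
      rw [← Matrix.toLin'_apply', LinearMap.toMatrix'_toLin']

lemma unit_bij {n : ℕ} {g : Matrix (Fin n) (Fin n) ℂ} (hg : IsUnit g) :
    Function.Bijective g.mulVecLin := by
  refine Function.bijective_iff_has_inverse.mpr ⟨(g⁻¹).mulVecLin, ?_, ?_⟩
  · intro v
    show g⁻¹ *ᵥ (g *ᵥ v) = v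
    rw [Matrix.mulVec_mulVec, unit_inv_mul hg, Matrix.one_mulVec]
  · intro v
    show g *ᵥ (g⁻¹ *ᵥ v) = v
    rw [Matrix.mulVec_mulVec, unit_mul_inv hg, Matrix.one_mulVec]

/-- main construction: a triangular rigid conjugate with rigid diagonal blocks -/
lemma exists_good_tri {d e : V → ℕ} (hle : ∀ i, e i ≤ d i)
    (Md : QRep s t d) (Me : QRep s t e) (Mde : QRep s t (fun i => d i - e i))
    (hMd : Rigid s t Md) (hMe : Rigid s t Me) (hMde : Rigid s t Mde)
    (N : SubRep s t Md e) :
    ∃ W : QRep s t d, Tri s t d e W ∧ Conj s t W Md ∧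
      Rigid s t (Ubl s t d e hle W) ∧ Rigid s t (Xbl s t d e hle W) := by
  classical
  obtain ⟨W0, hTri0, hConj0⟩ := exists_tri_conj hle Md N
  have hW0rig : Rigid s t W0 := rigid_of_conj (conj_symm hConj0) hMd
  set Δ : QRep s t d := fun a => Matrix.of fun r c =>
    if hr : (r : ℕ) < e (t a) then
      (if hc : (c : ℕ) < e (s a) then
        Me a ⟨(r : ℕ), hr⟩ ⟨(c : ℕ), hc⟩ - W0 a r c else 0)
    else
      (if hc : (c : ℕ) < e (s a) then 0
       else Mde a ⟨(r : ℕ) - e (t a), by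
            have h1 := r.isLt; have h2 := hle (t a)
            show (r : ℕ) - e (t a) < d (t a) - e (t a); omega⟩
          ⟨(c : ℕ) - e (s a), by
            have h1 := c.isLt; have h2 := hle (s a)
            show (c : ℕ) - e (s a) < d (s a) - e (s a); omega⟩ - W0 a r c) with hΔ
  have hΔ3 : ∀ a (r : Fin (d (t a))) (c : Fin (d (s a))),
      e (t a) ≤ (r : ℕ) → (c : ℕ) < e (s a) → Δ a r c = 0 := by
    intro a r c hr hc
    rw [hΔ]
    show dite _ _ _ = (0:ℂ)
    rw [dif_neg (not_lt.mpr hr), dif_pos hc]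
  have hγtri : ∀ z : ℂ, Tri s t d e (W0 + z • Δ) := by
    intro z a r c hr hc
    show (W0 a + z • Δ a) r c = 0
    rw [Matrix.add_apply, Matrix.smul_apply, hTri0 a r c hr hc, hΔ3 a r c hr hc,
      smul_zero, add_zero]
  have hγU : ∀ z : ℂ, Ubl s t d e hle (W0 + z • Δ)
      = Ubl s t d e hle W0 + z • (Me - Ubl s t d e hle W0) := by
    intro z
    funext a r c
    show (W0 a + z • Δ a) (Fin.castLE (hle (t a)) r) (Fin.castLE (hle (s a)) c) = _
    rw [Matrix.add_apply, Matrix.smul_apply]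
    have hΔ1 : Δ a (Fin.castLE (hle (t a)) r) (Fin.castLE (hle (s a)) c)
        = Me a r c - W0 a (Fin.castLE (hle (t a)) r) (Fin.castLE (hle (s a)) c) := by
      rw [hΔ]
      show dite _ _ _ = _
      rw [dif_pos (show ((Fin.castLE (hle (t a)) r : Fin (d (t a))) : ℕ) < e (t a)
        from r.isLt)]
      rw [dif_pos (show ((Fin.castLE (hle (s a)) c : Fin (d (s a))) : ℕ) < e (s a)
        from c.isLt)]
      rfl
    rw [hΔ1]
    show _ = (Ubl s t d e hle W0 a + z • (Me a - Ubl s t d e hle W0 a)) r c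
    rw [Matrix.add_apply, Matrix.smul_apply, Matrix.sub_apply]
    rfl
  have hγX : ∀ z : ℂ, Xbl s t d e hle (W0 + z • Δ)
      = Xbl s t d e hle W0 + z • (Mde - Xbl s t d e hle W0) := by
    intro z
    funext a r c
    show (W0 a + z • Δ a) (femb (hle (t a)) r) (femb (hle (s a)) c) = _
    rw [Matrix.add_apply, Matrix.smul_apply]
    have hΔ2 : Δ a (femb (hle (t a)) r) (femb (hle (s a)) c)
        = Mde a r c - W0 a (femb (hle (t a)) r) (femb (hle (s a)) c) := by
      rw [hΔ]
      show dite _ _ _ = _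
      rw [dif_neg (show ¬ ((femb (hle (t a)) r : Fin (d (t a))) : ℕ) < e (t a) by
        show ¬ (e (t a) + (r : ℕ) < e (t a)); omega)]
      rw [dif_neg (show ¬ ((femb (hle (s a)) c : Fin (d (s a))) : ℕ) < e (s a) by
        show ¬ (e (s a) + (c : ℕ) < e (s a)); omega)]
      have e1 : ((femb (hle (t a)) r : Fin (d (t a))) : ℕ) - e (t a) = (r : ℕ) := by
        show e (t a) + (r : ℕ) - e (t a) = (r : ℕ)
        omega
      have e2 : ((femb (hle (s a)) c : Fin (d (s a))) : ℕ) - e (s a) = (c : ℕ) := by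
        show e (s a) + (c : ℕ) - e (s a) = (c : ℕ)
        omega
      simp only [e1, e2]
    rw [hΔ2]
    show _ = (Xbl s t d e hle W0 a + z • (Mde a - Xbl s t d e hle W0 a)) r c
    rw [Matrix.add_apply, Matrix.smul_apply, Matrix.sub_apply]
    rfl
  have hB1 : {z : ℂ | ¬ Rigid s t (W0 + z • Δ)}.Finite := by
    apply rigid_line_finite W0 Δ 0
    rw [zero_smul, add_zero]
    exact hW0rig
  have hB2 : {z : ℂ | ¬ Rigid s t (Ubl s t d e hle W0
      + z • (Me - Ubl s t d e hle W0))}.Finite := by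
    apply rigid_line_finite _ _ 1
    rw [one_smul, add_sub_cancel]
    exact hMe
  have hB3 : {z : ℂ | ¬ Rigid s t (Xbl s t d e hle W0
      + z • (Mde - Xbl s t d e hle W0))}.Finite := by
    apply rigid_line_finite _ _ 1
    rw [one_smul, add_sub_cancel]
    exact hMde
  obtain ⟨z, hz⟩ := ((hB1.union hB2).union hB3).infinite_compl.nonempty
  simp only [Set.mem_compl_iff, Set.mem_union, Set.mem_setOf_eq, not_or, not_not] at hz
  obtain ⟨⟨hz1, hz2⟩, hz3⟩ := hz
  refine ⟨W0 + z • Δ, hγtri z, conj_of_rigid _ _ hz1 hMd, ?_, ?_⟩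
  · rw [hγU z]; exact hz2
  · rw [hγX z]; exact hz3

end RS

/-- If `M̃_d` has a subrepresentation of dimension vector `e`,
then there is a short exact sequence `0 → M̃_e → M̃_d → M̃_{d−e} → 0`. -/
theorem rigid_ses [Fintype V] [Fintype A] (s t : A → V)
    (hQ : IsDynkin s t) (d e : V → ℕ) (hle : ∀ i, e i ≤ d i)
    (Md : QRep s t d) (Me : QRep s t e) (Mde : QRep s t (fun i => d i - e i))
    (hMd : Rigid s t Md) (hMe : Rigid s t Me) (hMde : Rigid s t Mde)
    (hsub : Nonempty (SubRep s t Md e)) :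
    ∃ (f : RHom s t Me Md) (g : RHom s t Md Mde),
      (∀ i, Function.Injective (f.1 i).mulVecLin) ∧
      (∀ i, Function.Surjective (g.1 i).mulVecLin) ∧
      ∀ i, LinearMap.range (f.1 i).mulVecLin = LinearMap.ker (g.1 i).mulVecLin := by
  classical
  obtain ⟨N⟩ := hsub
  obtain ⟨W, hTriW, hConjW, hUrig, hXrig⟩ :=
    RS.exists_good_tri hle Md Me Mde hMd hMe hMde N
  obtain ⟨P, hPu, hP⟩ := hConjW
  obtain ⟨hmat, hhu, hh⟩ := RS.conj_of_rigid Me (RS.Ubl s t d e hle W) hMe hUrig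
  obtain ⟨kmat, hku, hk⟩ := RS.conj_of_rigid (RS.Xbl s t d e hle W) Mde hXrig hMde
  have hWP : ∀ a, W a * (P (s a))⁻¹ = (P (t a))⁻¹ * Md a := by
    intro a
    have h1 : (P (t a))⁻¹ * (P (t a) * W a) = W a :=
      Matrix.nonsing_inv_mul_cancel_left _ _ (RS.unit_det (hPu (t a)))
    rw [hP a] at h1
    rw [← h1, ← Matrix.mul_assoc ((P (t a))⁻¹) (Md a) (P (s a)),
      Matrix.mul_nonsing_inv_cancel_right _ _ (RS.unit_det (hPu (s a)))]
  have hfint : ∀ a, Md a * (P (s a) * (RS.Jmat (hle (s a)) * hmat (s a)))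
      = (P (t a) * (RS.Jmat (hle (t a)) * hmat (t a))) * Me a := by
    intro a
    calc Md a * (P (s a) * (RS.Jmat (hle (s a)) * hmat (s a)))
        = (Md a * P (s a)) * (RS.Jmat (hle (s a)) * hmat (s a)) :=
          (Matrix.mul_assoc _ _ _).symm
      _ = (P (t a) * W a) * (RS.Jmat (hle (s a)) * hmat (s a)) := by rw [← hP a]
      _ = P (t a) * (W a * (RS.Jmat (hle (s a)) * hmat (s a))) := Matrix.mul_assoc _ _ _
      _ = P (t a) * ((W a * RS.Jmat (hle (s a))) * hmat (s a)) := by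
          rw [Matrix.mul_assoc]
      _ = P (t a) * ((RS.Jmat (hle (t a)) * RS.Ubl s t d e hle W a) * hmat (s a)) := by
          rw [RS.W_mul_J s t hle hTriW a]
      _ = P (t a) * (RS.Jmat (hle (t a)) * (RS.Ubl s t d e hle W a * hmat (s a))) := by
          rw [Matrix.mul_assoc]
      _ = P (t a) * (RS.Jmat (hle (t a)) * (hmat (t a) * Me a)) := by rw [← hh a]
      _ = P (t a) * ((RS.Jmat (hle (t a)) * hmat (t a)) * Me a) := by
          rw [Matrix.mul_assoc]
      _ = (P (t a) * (RS.Jmat (hle (t a)) * hmat (t a))) * Me a :=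
          (Matrix.mul_assoc _ _ _).symm
  have hgint : ∀ a, Mde a * (kmat (s a) * (RS.Kmat (hle (s a)) * (P (s a))⁻¹))
      = (kmat (t a) * (RS.Kmat (hle (t a)) * (P (t a))⁻¹)) * Md a := by
    intro a
    calc Mde a * (kmat (s a) * (RS.Kmat (hle (s a)) * (P (s a))⁻¹))
        = (Mde a * kmat (s a)) * (RS.Kmat (hle (s a)) * (P (s a))⁻¹) :=
          (Matrix.mul_assoc _ _ _).symm
      _ = (kmat (t a) * RS.Xbl s t d e hle W a) * (RS.Kmat (hle (s a)) * (P (s a))⁻¹) := by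
          rw [← hk a]
      _ = kmat (t a) * (RS.Xbl s t d e hle W a * (RS.Kmat (hle (s a)) * (P (s a))⁻¹)) :=
          Matrix.mul_assoc _ _ _
      _ = kmat (t a) * ((RS.Xbl s t d e hle W a * RS.Kmat (hle (s a))) * (P (s a))⁻¹) := by
          rw [Matrix.mul_assoc]
      _ = kmat (t a) * ((RS.Kmat (hle (t a)) * W a) * (P (s a))⁻¹) := by
          rw [RS.X_mul_K s t hle hTriW a]
      _ = kmat (t a) * (RS.Kmat (hle (t a)) * (W a * (P (s a))⁻¹)) := by
          rw [Matrix.mul_assoc]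
      _ = kmat (t a) * (RS.Kmat (hle (t a)) * ((P (t a))⁻¹ * Md a)) := by rw [hWP a]
      _ = kmat (t a) * ((RS.Kmat (hle (t a)) * (P (t a))⁻¹) * Md a) := by
          rw [Matrix.mul_assoc]
      _ = (kmat (t a) * (RS.Kmat (hle (t a)) * (P (t a))⁻¹)) * Md a :=
          (Matrix.mul_assoc _ _ _).symm
  refine ⟨⟨fun i => P i * (RS.Jmat (hle i) * hmat i), hfint⟩,
    ⟨fun i => kmat i * (RS.Kmat (hle i) * (P i)⁻¹), hgint⟩, ?_, ?_, ?_⟩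
  · intro i
    show Function.Injective (P i * (RS.Jmat (hle i) * hmat i)).mulVecLin
    rw [Matrix.mulVecLin_mul, Matrix.mulVecLin_mul]
    rw [LinearMap.coe_comp, LinearMap.coe_comp]
    exact (RS.unit_bij (hPu i)).injective.comp
      ((RS.Jmat_inj (hle i)).comp (RS.unit_bij (hhu i)).injective)
  · intro i
    show Function.Surjective (kmat i * (RS.Kmat (hle i) * (P i)⁻¹)).mulVecLin
    rw [Matrix.mulVecLin_mul, Matrix.mulVecLin_mul]
    rw [LinearMap.coe_comp, LinearMap.coe_comp]
    exact (RS.unit_bij (hku i)).surjective.comp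
      ((RS.Kmat_surj (hle i)).comp (RS.unit_bij (RS.unit_inv_isUnit (hPu i))).surjective)
  · intro i
    show LinearMap.range (P i * (RS.Jmat (hle i) * hmat i)).mulVecLin
      = LinearMap.ker (kmat i * (RS.Kmat (hle i) * (P i)⁻¹)).mulVecLin
    rw [Matrix.mulVecLin_mul, Matrix.mulVecLin_mul, Matrix.mulVecLin_mul,
      Matrix.mulVecLin_mul]
    rw [LinearMap.range_comp, LinearMap.range_comp,
      LinearMap.range_eq_top.mpr (RS.unit_bij (hhu i)).surjective, Submodule.map_top]
    rw [LinearMap.ker_comp, LinearMap.ker_eq_bot.mpr (RS.unit_bij (hku i)).injective,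
      Submodule.comap_bot, LinearMap.ker_comp]
    rw [RS.range_J_eq_ker_K (hle i)]
    ext v
    constructor
    · rintro ⟨u, hu, rfl⟩
      rw [Submodule.mem_comap]
      show ((P i)⁻¹).mulVecLin ((P i).mulVecLin u) ∈ _
      have : ((P i)⁻¹).mulVecLin ((P i).mulVecLin u) = u := by
        show (P i)⁻¹ *ᵥ (P i *ᵥ u) = u
        rw [Matrix.mulVec_mulVec, RS.unit_inv_mul (hPu i), Matrix.one_mulVec]
      rw [this]
      exact hu
    · intro hv
      rw [Submodule.mem_comap] at hv
      refine ⟨((P i)⁻¹).mulVecLin v, hv, ?_⟩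
      show P i *ᵥ ((P i)⁻¹ *ᵥ v) = v
      rw [Matrix.mulVec_mulVec, RS.unit_mul_inv (hPu i), Matrix.one_mulVec]

end
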